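/- arXiv:2012.03779 — 4 statements merged into one kernel-verified Lean document; each statement's English description precedes it below -/
import Mathlib

section
/- Let 𝒜 be an abelian category with enough projectives and injectives, and let 𝒳 be a full subcategory closed under extensions. Suppose 𝒲 ⊆ 𝒳 is a generator for 𝒳, i.e., for every X ∈ 𝒳 there is a short exact sequence 0 → X' → W → X → 0 with W ∈ 𝒲 and X' ∈ 𝒳. If there are short exact sequences 0 → N → X₁ → D → 0 and 0 → D → X₀ → M → 0 with X₀, X₁ ∈ 𝒳, then there exist short exact sequences 0 → N → X₁' → D' → 0 and 0 → D' → W₀ → M → 0 with W₀ ∈ 𝒲 and X₁' ∈ 𝒳. -/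
open CategoryTheory CategoryTheory.Limits Opposite

universe v u

variable {A : Type u} [Category.{v} A] [Abelian A]

/-- `IsSES f g` : `0 → X → Y → Z → 0` is a short exact sequence. -/
def IsSES {X Y Z : A} (f : X ⟶ Y) (g : Y ⟶ Z) : Prop :=
  ∃ w : f ≫ g = 0, (ShortComplex.mk f g w).ShortExact

/-- `HasCoresLE S n C` : `C` admits a coresolution `0 → C → X₀ → ⋯ → X₋ₙ → 0`
with all terms in `S`. -/
def HasCoresLE (S : Set A) : ℕ → A → Prop
  | 0, C => C ∈ S
  | n+1, C => ∃ (X K : A) (f : C ⟶ X) (g : X ⟶ K), X ∈ S ∧ IsSES f g ∧ HasCoresLE S n K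

/-- `S` is closed under extensions. -/
def ExtClosed (S : Set A) : Prop :=
  ∀ ⦃X Y Z : A⦄ (f : X ⟶ Y) (g : Y ⟶ Z), IsSES f g → X ∈ S → Z ∈ S → Y ∈ S

/-- `S` is closed under cokernels of monomorphisms. -/
def CokerClosed (S : Set A) : Prop :=
  ∀ ⦃X Y Z : A⦄ (f : X ⟶ Y) (g : Y ⟶ Z), IsSES f g → X ∈ S → Y ∈ S → Z ∈ S

/-- `S` is closed under kernels of epimorphisms. -/
def KerClosed (S : Set A) : Prop :=
  ∀ ⦃X Y Z : A⦄ (f : X ⟶ Y) (g : Y ⟶ Z), IsSES f g → Y ∈ S → Z ∈ S → X ∈ S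

/-- `W` is a generator for `X` : every object of `X` receives an epimorphism from
an object of `W` with kernel in `X`. -/
def IsGen (W X : Set A) : Prop :=
  W ⊆ X ∧ ∀ C ∈ X, ∃ (X' W₀ : A) (f : X' ⟶ W₀) (g : W₀ ⟶ C),
    W₀ ∈ W ∧ X' ∈ X ∧ IsSES f g

/-- `Extⁱ(X, Y) = 0`. -/
def ExtVanish [EnoughProjectives A] (i : ℕ) (X Y : A) : Prop :=
  IsZero (((Ext ℤ A i).obj (op X)).obj Y)

/-- `W` is `X`-projective: `Extⁱ(W, X) = 0` for all `i ≥ 1`. -/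
def IsXProj [EnoughProjectives A] (W X : Set A) : Prop :=
  ∀ W' ∈ W, ∀ X' ∈ X, ∀ i : ℕ, 1 ≤ i → ExtVanish i W' X'

section helpers

/-- Pulling back a SES `0 → K → Y → Z → 0` along `h : Z' → Z` gives a SES
`0 → K → pullback h g → Z' → 0`. -/
lemma pullback_fst_ses {K Y Z Z' : A} (k : K ⟶ Y) (g : Y ⟶ Z) (h : Z' ⟶ Z)
    (hs : IsSES k g) : ∃ l : K ⟶ pullback h g, IsSES l (pullback.fst h g) := by
  obtain ⟨w, hse⟩ := hs
  haveI hM : Mono k := hse.mono_f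
  haveI hE : Epi g := hse.epi_g
  set l : K ⟶ pullback h g := pullback.lift 0 k (by simp [w]) with hl
  have w' : l ≫ pullback.fst h g = 0 := pullback.lift_fst _ _ _
  haveI hmono : Mono l := by
    have : Mono (l ≫ pullback.snd h g) := by
      rw [hl, pullback.lift_snd]; infer_instance
    exact mono_of_mono l (pullback.snd h g)
  refine ⟨l, w', ?_⟩
  have hfIsK : IsLimit (KernelFork.ofι l w') := by
    refine KernelFork.IsLimit.ofι' l w' (fun {T} t ht => ?_)
    have ht' : (t ≫ pullback.snd h g) ≫ g = 0 := by
      rw [Category.assoc, ← pullback.condition, ← Category.assoc, ht, zero_comp]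
    refine ⟨hse.exact.lift (t ≫ pullback.snd h g) ht', ?_⟩
    apply pullback.hom_ext
    · rw [ht, Category.assoc, hl, pullback.lift_fst, comp_zero]
    · rw [Category.assoc, hl, pullback.lift_snd]
      exact hse.exact.lift_f (t ≫ pullback.snd h g) ht'
  haveI : Epi (pullback.fst h g) := inferInstance
  exact { exact := ShortComplex.exact_of_f_is_kernel _ hfIsK }

/-- Symmetric version: `0 → K → pullback g h → Z' → 0` with the second projection. -/
lemma pullback_snd_ses {K Y Z Z' : A} (k : K ⟶ Y) (g : Y ⟶ Z) (h : Z' ⟶ Z)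
    (hs : IsSES k g) : ∃ l : K ⟶ pullback g h, IsSES l (pullback.snd g h) := by
  obtain ⟨w, hse⟩ := hs
  haveI hM : Mono k := hse.mono_f
  haveI hE : Epi g := hse.epi_g
  set l : K ⟶ pullback g h := pullback.lift k 0 (by simp [w]) with hl
  have w' : l ≫ pullback.snd g h = 0 := pullback.lift_snd _ _ _
  haveI hmono : Mono l := by
    have : Mono (l ≫ pullback.fst g h) := by
      rw [hl, pullback.lift_fst]; infer_instance
    exact mono_of_mono l (pullback.fst g h)
  refine ⟨l, w', ?_⟩
  have hfIsK : IsLimit (KernelFork.ofι l w') := by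
    refine KernelFork.IsLimit.ofι' l w' (fun {T} t ht => ?_)
    have ht' : (t ≫ pullback.fst g h) ≫ g = 0 := by
      rw [Category.assoc, pullback.condition, ← Category.assoc, ht, zero_comp]
    refine ⟨hse.exact.lift (t ≫ pullback.fst g h) ht', ?_⟩
    apply pullback.hom_ext
    · rw [Category.assoc, hl, pullback.lift_fst]
      exact hse.exact.lift_f (t ≫ pullback.fst g h) ht'
    · rw [ht, Category.assoc, hl, pullback.lift_snd, comp_zero]
  haveI : Epi (pullback.snd g h) := inferInstance
  exact { exact := ShortComplex.exact_of_f_is_kernel _ hfIsK }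

/-- Pulling back a SES `0 → D → X₀ → M → 0` along an epi `g : W₀ → X₀` gives a SES
`0 → pullback c g → W₀ → M → 0`. -/
lemma pullback_epi_ses {D X₀ M W₀ : A} (c : D ⟶ X₀) (d : X₀ ⟶ M) (g : W₀ ⟶ X₀)
    [Epi g] (hs : IsSES c d) : IsSES (pullback.snd c g) (g ≫ d) := by
  obtain ⟨w, hse⟩ := hs
  haveI hM : Mono c := hse.mono_f
  haveI hE : Epi d := hse.epi_g
  have w' : pullback.snd c g ≫ g ≫ d = 0 := by
    rw [← Category.assoc, ← pullback.condition, Category.assoc, w, comp_zero]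
  refine ⟨w', ?_⟩
  have hfIsK : IsLimit (KernelFork.ofι (pullback.snd c g) w') := by
    refine KernelFork.IsLimit.ofι' _ w' (fun {T} t ht => ?_)
    have ht' : (t ≫ g) ≫ d = 0 := by rw [Category.assoc]; exact ht
    refine ⟨pullback.lift (hse.exact.lift (t ≫ g) ht') t ?_, pullback.lift_snd _ _ _⟩
    exact hse.exact.lift_f (t ≫ g) ht'
  have : Epi (g ≫ d) := epi_comp g d
  exact { exact := ShortComplex.exact_of_f_is_kernel _ hfIsK }

end helpers

/-- Lemma 3.4 of the paper, abelian version. -/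
theorem stmt0 [EnoughProjectives A] [EnoughInjectives A]
    (𝒳 𝒲 : Set A) (hX : ExtClosed 𝒳) (hgen : IsGen 𝒲 𝒳)
    {N X₁ D X₀ M : A} (a : N ⟶ X₁) (b : X₁ ⟶ D) (c : D ⟶ X₀) (d : X₀ ⟶ M)
    (h1 : IsSES a b) (h2 : IsSES c d) (hX1 : X₁ ∈ 𝒳) (hX0 : X₀ ∈ 𝒳) :
    ∃ (X₁' D' W₀ : A) (a' : N ⟶ X₁') (b' : X₁' ⟶ D') (c' : D' ⟶ W₀) (d' : W₀ ⟶ M),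
      W₀ ∈ 𝒲 ∧ X₁' ∈ 𝒳 ∧ IsSES a' b' ∧ IsSES c' d' := by
  -- choose an epimorphism from `W₀ ∈ 𝒲` onto `X₀` with kernel `X' ∈ 𝒳`
  obtain ⟨X', W₀, f, g, hW, hX', hfg⟩ := hgen.2 X₀ hX0
  haveI : Epi g := hfg.2.epi_g
  -- `D' := pullback c g`; SES `0 → D' → W₀ → M → 0`
  have hcd : IsSES (pullback.snd c g) (g ≫ d) := pullback_epi_ses c d g h2
  -- SES `0 → X' → D' → D → 0`
  obtain ⟨l, hl⟩ := pullback_fst_ses f g c hfg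
  -- `X₁' := pullback b (pullback.fst c g)`; SES `0 → X' → X₁' → X₁ → 0`
  obtain ⟨l', hl'⟩ := pullback_fst_ses l (pullback.fst c g) b hl
  -- hence `X₁' ∈ 𝒳` by extension-closure
  have hX1' : pullback b (pullback.fst c g) ∈ 𝒳 := hX _ _ hl' hX' hX1
  -- SES `0 → N → X₁' → D' → 0`
  obtain ⟨a', ha'⟩ := pullback_snd_ses a b (pullback.fst c g) h1
  exact ⟨pullback b (pullback.fst c g), pullback c g, W₀, a',
    pullback.snd b (pullback.fst c g), pullback.snd c g, g ≫ d,
    hW, hX1', ha', hcd⟩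
end

section
/- Let 𝒜 be an abelian category with enough projectives, 𝒳 an extension-closed full subcategory, and 𝒲 ⊆ 𝒳 a generator for 𝒳. For C ∈ 𝒳 and a nonnegative integer n, C admits a coresolution 0 → C → X₀ → X₋₁ → ⋯ → X₋ₙ → 0 with all X₋ᵢ ∈ 𝒳 if and only if C admits a coresolution 0 → C → X₀ → W₋₁ → ⋯ → W₋ₙ → 0 with X₀ ∈ 𝒳 and W₋ᵢ ∈ 𝒲 for 1 ≤ i ≤ n. -/
open CategoryTheory CategoryTheory.Limits Opposite

universe v u

variable {A : Type u} [Category.{v} A] [Abelian A]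

/-- Coresolutions of the mixed shape `0 → C → X₀ → W₋₁ → ⋯ → W₋ₙ → 0`
with `X₀ ∈ X` and all further terms in `W`. -/
def HasMixedCoresLE (X W : Set A) : ℕ → A → Prop
  | 0, C => C ∈ X
  | n+1, C => ∃ (X₀ K : A) (f : C ⟶ X₀) (g : X₀ ⟶ K), X₀ ∈ X ∧ IsSES f g ∧ HasCoresLE W n K

/-- Transport a short exact sequence along an isomorphism of the middle object. -/
lemma isSES_of_iso {X Y Y' Z : A} {f : X ⟶ Y} {g : Y ⟶ Z} (h : IsSES f g) (e : Y ≅ Y') :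
    IsSES (f ≫ e.hom) (e.inv ≫ g) := by
  obtain ⟨w, hw⟩ := h
  have w' : (f ≫ e.hom) ≫ (e.inv ≫ g) = 0 := by
    rw [Category.assoc, e.hom_inv_id_assoc, w]
  refine ⟨w', ShortComplex.shortExact_of_iso ?_ hw⟩
  exact ShortComplex.isoMk (Iso.refl _) e (Iso.refl _) (by simp) (by simp)

/-- Pulling back a short exact sequence `N → W → Z` along `q : X → Z` gives a short
exact sequence `N → pullback q p → X`. -/
lemma isSES_pullback {X Z N W : A} (q : X ⟶ Z) {k : N ⟶ W} {p : W ⟶ Z} (h : IsSES k p) :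
    ∃ ℓ : N ⟶ pullback q p, IsSES ℓ (pullback.fst q p) := by
  obtain ⟨w, hw⟩ := h
  haveI : Mono k := hw.mono_f
  haveI : Epi p := hw.epi_g
  have hzero : (0 : N ⟶ X) ≫ q = k ≫ p := by rw [w, zero_comp]
  refine ⟨pullback.lift 0 k hzero, ?_⟩
  have hfst : pullback.lift 0 k hzero ≫ pullback.fst q p = 0 := pullback.lift_fst _ _ _
  have hsnd : pullback.lift 0 k hzero ≫ pullback.snd q p = k := pullback.lift_snd _ _ _
  haveI : Mono (pullback.lift 0 k hzero) := by
    have : Mono (pullback.lift 0 k hzero ≫ pullback.snd q p) := by rw [hsnd]; infer_instance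
    exact mono_of_mono _ (pullback.snd q p)
  refine ⟨hfst, ?_⟩
  have hker : IsLimit (KernelFork.ofι (pullback.lift 0 k hzero) hfst) := by
    refine KernelFork.IsLimit.ofι _ _ (fun {T} t ht => ?_) (fun {T} t ht => ?_)
      (fun {T} t ht m hm => ?_)
    · -- construct the lift
      have h0 : (t ≫ pullback.snd q p) ≫ p = 0 := by
        rw [Category.assoc, ← pullback.condition, ← Category.assoc, ht, zero_comp]
      exact (KernelFork.IsLimit.lift' hw.fIsKernel (t ≫ pullback.snd q p) h0).1
    · -- factorization
      apply pullback.hom_ext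
      · rw [Category.assoc, hfst, comp_zero, ht]
      · rw [Category.assoc, hsnd]
        exact (KernelFork.IsLimit.lift' hw.fIsKernel (t ≫ pullback.snd q p) _).2
    · -- uniqueness
      have h0 : (t ≫ pullback.snd q p) ≫ p = 0 := by
        rw [Category.assoc, ← pullback.condition, ← Category.assoc, ht, zero_comp]
      apply (cancel_mono (pullback.lift 0 k hzero)).1
      rw [hm]
      apply pullback.hom_ext
      · rw [Category.assoc, hfst, comp_zero, ht]
      · rw [Category.assoc, hsnd]
        exact ((KernelFork.IsLimit.lift' hw.fIsKernel (t ≫ pullback.snd q p) h0).2).symm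
  refine ShortComplex.ShortExact.mk' (ShortComplex.exact_of_f_is_kernel _ hker) ?_ ?_
  · exact inferInstance
  · exact inferInstance

/-- Pulling back a mono `i : K → X₁` (with cokernel `r`) along an epi `p : W → X₁` gives
a short exact sequence `pullback i p → W → K''`. -/
lemma isSES_pullback_snd {K X₁ K'' W : A} {i : K ⟶ X₁} {r : X₁ ⟶ K''} (h : IsSES i r)
    (p : W ⟶ X₁) [Epi p] :
    IsSES (pullback.snd i p) (p ≫ r) := by
  obtain ⟨w, hw⟩ := h
  haveI : Mono i := hw.mono_f
  haveI : Epi r := hw.epi_g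
  have hzero : pullback.snd i p ≫ p ≫ r = 0 := by
    rw [← pullback.condition_assoc, w, comp_zero]
  refine ⟨hzero, ?_⟩
  have hker : IsLimit (KernelFork.ofι (pullback.snd i p) hzero) := by
    refine KernelFork.IsLimit.ofι' _ _ (fun {T} t ht => ?_)
    have h0 : (t ≫ p) ≫ r = 0 := by rw [Category.assoc, ht]
    obtain ⟨u, hu⟩ := KernelFork.IsLimit.lift' hw.fIsKernel (t ≫ p) h0
    have hui : u ≫ i = t ≫ p := hu
    exact ⟨pullback.lift u t hui, pullback.lift_snd _ _ _⟩
  refine ShortComplex.ShortExact.mk' (ShortComplex.exact_of_f_is_kernel _ hker) ?_ ?_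
  · exact inferInstance
  · exact epi_comp _ _

/-- The key pullback step: given `0 → D → X₀ → K → 0` with `X₀ ∈ 𝒳` and an epimorphism
`π : M → K` with kernel `N ∈ 𝒳`, we may replace `X₀` by an object `P ∈ 𝒳` with
`0 → D → P → M → 0` exact. -/
lemma pullback_step {𝒳 : Set A} (hX : ExtClosed 𝒳) {D X₀ K N M : A} {f : D ⟶ X₀} {g : X₀ ⟶ K}
    {k : N ⟶ M} {π : M ⟶ K} (h1 : IsSES f g) (h2 : IsSES k π) (hX₀ : X₀ ∈ 𝒳) (hN : N ∈ 𝒳) :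
    ∃ (P : A) (f' : D ⟶ P) (g' : P ⟶ M), P ∈ 𝒳 ∧ IsSES f' g' := by
  obtain ⟨ℓ, hℓ⟩ := isSES_pullback π h1
  obtain ⟨ℓ', hℓ'⟩ := isSES_pullback g h2
  have hP : pullback π g ∈ 𝒳 :=
    hX _ _ (isSES_of_iso hℓ' (pullbackSymmetry g π)) hN hX₀
  exact ⟨pullback π g, ℓ, pullback.fst π g, hP, hℓ⟩

lemma hasCoresLE_mono {𝒲 𝒳 : Set A} (h : 𝒲 ⊆ 𝒳) :
    ∀ (n : ℕ) (C : A), HasCoresLE 𝒲 n C → HasCoresLE 𝒳 n C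
  | 0, _, hC => h hC
  | n+1, _, ⟨X, K, f, g, hXW, hses, hrest⟩ =>
    ⟨X, K, f, g, h hXW, hses, hasCoresLE_mono h n K hrest⟩

lemma forward_aux {𝒳 𝒲 : Set A} (hX : ExtClosed 𝒳) (hgen : IsGen 𝒲 𝒳) :
    ∀ (n : ℕ) (D : A), HasCoresLE 𝒳 n D → HasMixedCoresLE 𝒳 𝒲 n D := by
  intro n
  induction n with
  | zero => intro D h; exact h
  | succ n ih =>
    intro D h
    obtain ⟨X₀, K, f, g, hX₀, hfg, hK⟩ := h
    have hK' := ih K hK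
    cases n with
    | zero =>
      -- `K ∈ 𝒳`; use the generator directly
      obtain ⟨X', W, k, p, hW, hX', hkp⟩ := hgen.2 K hK'
      obtain ⟨P, f', g', hP, hses⟩ := pullback_step hX hfg hkp hX₀ hX'
      exact ⟨P, W, f', g', hP, hses, hW⟩
    | succ m =>
      obtain ⟨X₁, K'', i, r, hX₁, hir, hK''⟩ := hK'
      obtain ⟨X₁', W₁, k, p, hW₁, hX₁', hkp⟩ := hgen.2 X₁ hX₁
      haveI : Epi p := by
        obtain ⟨wkp, hkp'⟩ := hkp
        exact hkp'.epi_g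
      -- `M := pullback i p` is an 𝒳-approximation of `K` built from `W₁`
      obtain ⟨ℓ, hℓ⟩ := isSES_pullback i hkp
      have hMW := isSES_pullback_snd hir p
      obtain ⟨P, f', g', hP, hses⟩ := pullback_step hX hfg hℓ hX₀ hX₁'
      exact ⟨P, pullback i p, f', g', hP, hses,
        ⟨W₁, K'', pullback.snd i p, p ≫ r, hW₁, hMW, hK''⟩⟩

/-- Lemma 3.5 of the paper, abelian version. -/
theorem stmt1 [EnoughProjectives A]
    (𝒳 𝒲 : Set A) (hX : ExtClosed 𝒳) (hgen : IsGen 𝒲 𝒳)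
    (C : A) (hC : C ∈ 𝒳) (n : ℕ) :
    HasCoresLE 𝒳 n C ↔ HasMixedCoresLE 𝒳 𝒲 n C := by
  constructor
  · exact fun h => forward_aux hX hgen n C h
  · intro h
    cases n with
    | zero => exact h
    | succ n =>
      obtain ⟨X₀, K, f, g, hX₀, hses, hK⟩ := h
      exact ⟨X₀, K, f, g, hX₀, hses, hasCoresLE_mono hgen.1 n K hK⟩
end

section
/- Let 𝒜 be an abelian category, 𝒳 extension-closed, and 𝒲 an 𝒳-projective generator for 𝒳. Then 𝒲 = 𝒳 ∩ ⊥𝒳, where ⊥𝒳 = {Y : Extⁱ(Y, X) = 0 for all X ∈ 𝒳, i ≥ 1}. -/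
open CategoryTheory CategoryTheory.Limits Opposite

universe v u

variable {A : Type u} [Category.{v} A] [Abelian A]

lemma splits_of_ext_vanish [EnoughProjectives A] {X' W X : A} (f : X' ⟶ W) (g : W ⟶ X)
    (hses : IsSES f g) (hvan : ExtVanish 1 X X') : ∃ σ : X ⟶ W, σ ≫ g = 𝟙 X := by
  obtain ⟨w, hse⟩ := hses
  have := hse.mono_f
  have : Epi g := hse.epi_g
  have hexact := hse.exact
  let P : ProjectiveResolution X := (HasProjectiveResolution.out (Z := X)).some
  have hP : Projective (P.complex.X 0) := P.projective 0
  -- lift the augmentation through g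
  let π₀ : P.complex.X 0 ⟶ W := Projective.factorThru (X := X) (P.π.f 0) g
  have hπ₀ : π₀ ≫ g = P.π.f 0 := Projective.factorThru_comp (X := X) _ _
  have hd : P.complex.d 1 0 ≫ P.π.f 0 = 0 := P.complex_d_comp_π_f_zero
  have hdg : (P.complex.d 1 0 ≫ π₀) ≫ g = 0 := by
    rw [Category.assoc, hπ₀]; exact hd
  -- factor through the kernel X'
  let α : P.complex.X 1 ⟶ X' := hexact.lift (P.complex.d 1 0 ≫ π₀) hdg
  have hα : α ≫ f = P.complex.d 1 0 ≫ π₀ := hexact.lift_f _ _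
  have hcocycle : P.complex.d 2 1 ≫ α = 0 := by
    rw [← cancel_mono f, Category.assoc, hα, ← Category.assoc,
      HomologicalComplex.d_comp_d, zero_comp, zero_comp]
  -- use vanishing of Ext¹
  let CC := P.complex.linearYonedaObj ℤ X'
  have hzero : IsZero (CC.homology 1) :=
    hvan.of_iso (P.isoExt 1 X').symm
  have hE : CC.ExactAt 1 := (HomologicalComplex.exactAt_iff_isZero_homology _ _).2 hzero
  rw [CC.exactAt_iff' 0 1 2 (ComplexShape.prev_eq' _ (by simp))
    (ComplexShape.next_eq' _ (by simp))] at hE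
  rw [ShortComplex.moduleCat_exact_iff] at hE
  have hαmem : (CC.sc' 0 1 2).g α = 0 := by
    show P.complex.d 2 1 ≫ α = 0
    exact hcocycle
  obtain ⟨β, hβ⟩ := hE α hαmem
  have hβ' : P.complex.d 1 0 ≫ (β : P.complex.X 0 ⟶ X') = α := hβ
  -- correct π₀ to kill d 1 0
  have h0 : P.complex.d 1 0 ≫ (π₀ - β ≫ f) = 0 := by
    rw [Preadditive.comp_sub, sub_eq_zero]
    exact ((congrArg (· ≫ f) hβ').trans hα).symm.trans (Category.assoc _ _ _)
  -- descend along the cokernel P.π.f 0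
  let σ : X ⟶ W := Cofork.IsColimit.desc P.isColimitCokernelCofork (π₀ - β ≫ f) (by rw [h0, zero_comp])
  have hσ : P.π.f 0 ≫ σ = π₀ - β ≫ f :=
    Cofork.IsColimit.π_desc' P.isColimitCokernelCofork _ _
  refine ⟨σ, ?_⟩
  have : Epi (P.π.f 0) := inferInstance
  refine (cancel_epi (P.π.f 0)).1 ?_
  have e : (π₀ - β ≫ f) ≫ g = P.π.f 0 := by
    rw [Preadditive.sub_comp]
    have e2 : (β ≫ f) ≫ g = 0 := (Category.assoc _ f g).trans ((congrArg (_ ≫ ·) w).trans comp_zero)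
    exact (congrArg₂ (fun a b => a - b) hπ₀ e2).trans (sub_zero _)
  exact (Category.assoc _ _ _).symm.trans ((congrArg (· ≫ g) hσ).trans (e.trans (Category.comp_id _).symm))


/-- Proposition 4.2(2), abelian version. -/
theorem stmt8 [EnoughProjectives A] [EnoughInjectives A]
    (𝒳 𝒲 : Set A) (hX : ExtClosed 𝒳) (hgen : IsGen 𝒲 𝒳) (hproj : IsXProj 𝒲 𝒳)
    (hWiso : ∀ ⦃X Y : A⦄, (X ≅ Y) → X ∈ 𝒲 → Y ∈ 𝒲)
    (hWretract : ∀ ⦃X Y : A⦄ (r : X ⟶ Y) (s : Y ⟶ X), s ≫ r = 𝟙 Y → X ∈ 𝒲 → Y ∈ 𝒲) :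
    𝒲 = 𝒳 ∩ {Y : A | ∀ i : ℕ, 1 ≤ i → ∀ Z ∈ 𝒳, ExtVanish i Y Z} := by
  apply Set.eq_of_subset_of_subset
  · intro W' hW'
    exact ⟨hgen.1 hW', fun i hi Z hZ => hproj W' hW' Z hZ i hi⟩
  · rintro X ⟨hXX, hvan⟩
    obtain ⟨X', W₀, f, g, hW₀, hX', hses⟩ := hgen.2 X hXX
    obtain ⟨σ, hσ⟩ := splits_of_ext_vanish f g hses (hvan 1 le_rfl X' hX')
    exact hWretract g σ hσ hW₀
end

section
/- Let 𝒞 be the category of cochain complexes over an abelian category 𝒜 equipped with the degreewise-split exact structure. Then 𝒞 is a Frobenius exact category: it has enough projectives and injectives with respect to degreewise-split short exact sequences, and the projective objects coincide with the injective objects, both being exactly the contractible complexes. -/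
open CategoryTheory CategoryTheory.Limits

universe v u

variable {A : Type u} [Category.{v} A] [Abelian A]

/-- A degreewise split short exact sequence of cochain complexes:
in each degree, `Y n` is a biproduct of `X n` and `Z n` via `f`, `g` and the
chosen (degreewise) retraction and section. -/
def DegSplitSES {X Y Z : CochainComplex A ℤ} (f : X ⟶ Y) (g : Y ⟶ Z) : Prop :=
  f ≫ g = 0 ∧ ∀ n : ℤ, ∃ (r : Y.X n ⟶ X.X n) (s : Z.X n ⟶ Y.X n),
    f.f n ≫ r = 𝟙 (X.X n) ∧ s ≫ g.f n = 𝟙 (Z.X n) ∧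
      r ≫ f.f n + g.f n ≫ s = 𝟙 (Y.X n)

/-- Projective with respect to the degreewise split exact structure. -/
def RelProj (P : CochainComplex A ℤ) : Prop :=
  ∀ ⦃X Y Z : CochainComplex A ℤ⦄ (f : X ⟶ Y) (g : Y ⟶ Z), DegSplitSES f g →
    ∀ h : P ⟶ Z, ∃ k : P ⟶ Y, k ≫ g = h

/-- Injective with respect to the degreewise split exact structure. -/
def RelInj (I : CochainComplex A ℤ) : Prop :=
  ∀ ⦃X Y Z : CochainComplex A ℤ⦄ (f : X ⟶ Y) (g : Y ⟶ Z), DegSplitSES f g →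
    ∀ h : X ⟶ I, ∃ k : Y ⟶ I, f ≫ k = h

/-- A complex is contractible if its identity is null-homotopic. -/
def Contractible (X : CochainComplex A ℤ) : Prop :=
  Nonempty (Homotopy (𝟙 X) (0 : X ⟶ X))

/-! ### Helper lemmas -/

lemma eqToHom_d (X : CochainComplex A ℤ) {i j : ℤ} (h : i = j) (k : ℤ) :
    eqToHom (congrArg X.X h) ≫ X.d j k = X.d i k := by subst h; simp

lemma d_eqToHom (X : CochainComplex A ℤ) (i : ℤ) {j k : ℤ} (h : j = k) :
    X.d i j ≫ eqToHom (congrArg X.X h) = X.d i k := by subst h; simp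

lemma contractible_of_retract {P Q : CochainComplex A ℤ} (u : P ⟶ Q) (v : Q ⟶ P)
    (huv : u ≫ v = 𝟙 P) (hQ : Contractible Q) : Contractible P := by
  obtain ⟨H⟩ := hQ
  exact ⟨(Homotopy.ofEq (by simp [← huv])).trans
    (((H.compLeft u).compRight v).trans (Homotopy.ofEq (by simp)))⟩

/-! ### Contractible implies relative projectivity / injectivity -/

lemma relProj_of_contractible {P : CochainComplex A ℤ} (hP : Contractible P) : RelProj P := by
  obtain ⟨H⟩ := hP
  intro X Y Z f g hses h
  obtain ⟨hfg, hsp⟩ := hses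
  choose r s hr hs hrs using hsp
  refine ⟨{ f := fun n => (P.d n (n+1) ≫ H.hom (n+1) n ≫ h.f n ≫ s n
      + H.hom n (n-1) ≫ h.f (n-1) ≫ s (n-1) ≫ Y.d (n-1) n), comm' := ?_ }, ?_⟩
  · intro i j hij
    obtain rfl : i + 1 = j := hij
    simp only [Preadditive.add_comp, Preadditive.comp_add, Category.assoc,
      HomologicalComplex.d_comp_d, HomologicalComplex.d_comp_d_assoc, comp_zero, zero_comp,
      add_zero, zero_add]
    rw [show i + 1 - 1 = i by omega]
  · ext n
    have hcomm : (𝟙 P : P ⟶ P).f n = dNext n H.hom + prevD n H.hom + (0 : P ⟶ P).f n := H.comm n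
    rw [dNext_eq H.hom (show (ComplexShape.up ℤ).Rel n (n+1) from rfl),
      prevD_eq H.hom (show (ComplexShape.up ℤ).Rel (n-1) n by simp)] at hcomm
    simp only [HomologicalComplex.id_f, HomologicalComplex.zero_f, add_zero] at hcomm
    have h1 : Y.d (n-1) n ≫ g.f n = g.f (n-1) ≫ Z.d (n-1) n := (g.comm (n-1) n).symm
    have h2 : h.f (n-1) ≫ Z.d (n-1) n = P.d (n-1) n ≫ h.f n := h.comm (n-1) n
    calc (P.d n (n+1) ≫ H.hom (n+1) n ≫ h.f n ≫ s n
          + H.hom n (n-1) ≫ h.f (n-1) ≫ s (n-1) ≫ Y.d (n-1) n) ≫ g.f n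
        = P.d n (n+1) ≫ H.hom (n+1) n ≫ h.f n ≫ (s n ≫ g.f n)
          + H.hom n (n-1) ≫ h.f (n-1) ≫ s (n-1) ≫ Y.d (n-1) n ≫ g.f n := by
          simp [Preadditive.add_comp, Category.assoc]
      _ = P.d n (n+1) ≫ H.hom (n+1) n ≫ h.f n
          + H.hom n (n-1) ≫ h.f (n-1) ≫ (s (n-1) ≫ g.f (n-1)) ≫ Z.d (n-1) n := by
          rw [hs n, h1]; simp [Category.assoc]
      _ = P.d n (n+1) ≫ H.hom (n+1) n ≫ h.f n
          + H.hom n (n-1) ≫ P.d (n-1) n ≫ h.f n := by rw [hs (n-1)]; simp [h2]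
      _ = ((P.d n (n+1) ≫ H.hom (n+1) n) + (H.hom n (n-1) ≫ P.d (n-1) n)) ≫ h.f n := by
          simp [Preadditive.add_comp, Category.assoc]
      _ = h.f n := by rw [← hcomm]; simp

lemma relInj_of_contractible {I : CochainComplex A ℤ} (hI : Contractible I) : RelInj I := by
  obtain ⟨H⟩ := hI
  intro X Y Z f g hses h
  obtain ⟨hfg, hsp⟩ := hses
  choose r s hr hs hrs using hsp
  refine ⟨{ f := fun n => (Y.d n (n+1) ≫ r (n+1) ≫ h.f (n+1) ≫ H.hom (n+1) n
      + r n ≫ h.f n ≫ H.hom n (n-1) ≫ I.d (n-1) n), comm' := ?_ }, ?_⟩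
  · intro i j hij
    obtain rfl : i + 1 = j := hij
    simp only [Preadditive.add_comp, Preadditive.comp_add, Category.assoc,
      HomologicalComplex.d_comp_d, HomologicalComplex.d_comp_d_assoc, comp_zero, zero_comp,
      add_zero, zero_add]
    rw [show i + 1 - 1 = i by omega]
  · ext n
    have hcomm : (𝟙 I : I ⟶ I).f n = dNext n H.hom + prevD n H.hom + (0 : I ⟶ I).f n := H.comm n
    rw [dNext_eq H.hom (show (ComplexShape.up ℤ).Rel n (n+1) from rfl),
      prevD_eq H.hom (show (ComplexShape.up ℤ).Rel (n-1) n by simp)] at hcomm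
    simp only [HomologicalComplex.id_f, HomologicalComplex.zero_f, add_zero] at hcomm
    have h1 : f.f n ≫ Y.d n (n+1) = X.d n (n+1) ≫ f.f (n+1) := f.comm n (n+1)
    have h2 : X.d n (n+1) ≫ h.f (n+1) = h.f n ≫ I.d n (n+1) := (h.comm n (n+1)).symm
    calc f.f n ≫ (Y.d n (n+1) ≫ r (n+1) ≫ h.f (n+1) ≫ H.hom (n+1) n
          + r n ≫ h.f n ≫ H.hom n (n-1) ≫ I.d (n-1) n)
        = (X.d n (n+1) ≫ (f.f (n+1) ≫ r (n+1)) ≫ h.f (n+1) ≫ H.hom (n+1) n)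
          + (f.f n ≫ r n) ≫ h.f n ≫ H.hom n (n-1) ≫ I.d (n-1) n := by
          rw [Preadditive.comp_add, reassoc_of% h1]; simp [Category.assoc]
      _ = X.d n (n+1) ≫ h.f (n+1) ≫ H.hom (n+1) n
          + h.f n ≫ H.hom n (n-1) ≫ I.d (n-1) n := by rw [hr (n+1), hr n]; simp
      _ = h.f n ≫ ((I.d n (n+1) ≫ H.hom (n+1) n) + (H.hom n (n-1) ≫ I.d (n-1) n)) := by
          rw [reassoc_of% h2]; simp [Preadditive.comp_add, Category.assoc]
      _ = h.f n := by rw [← hcomm]; simp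

/-! ### The projective cover -/

/-- The contractible complex `X.X (n-1) ⊞ X.X n` covering `X`. -/
@[reducible]
noncomputable def covP (X : CochainComplex A ℤ) : CochainComplex A ℤ where
  X n := X.X (n-1) ⊞ X.X n
  d n m := if h : n + 1 = m then
      biprod.snd ≫ eqToHom (congrArg X.X (show n = m - 1 by omega)) ≫ biprod.inl else 0
  shape n m h := dif_neg h
  d_comp_d' i j k hij hjk := by
    show _
    rw [dif_pos (show i + 1 = j from hij), dif_pos (show j + 1 = k from hjk)]
    simp
lemma covP_X (X : CochainComplex A ℤ) (n : ℤ) : (covP X).X n = (X.X (n-1) ⊞ X.X n) := rfl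
lemma covP_d (X : CochainComplex A ℤ) {n m : ℤ} (h : n + 1 = m) :
    (covP X).d n m
      = biprod.snd ≫ eqToHom (congrArg X.X (show n = m - 1 by omega)) ≫ biprod.inl :=
  dif_pos h

/-- The kernel of the cover, `X.X (n-1)` with differential `-d`. -/
noncomputable def covK (X : CochainComplex A ℤ) : CochainComplex A ℤ where
  X n := X.X (n-1)
  d n m := -X.d (n-1) (m-1)
  shape n m h := by
    show _
    rw [X.shape, neg_zero]
    intro hc
    have hc' : n - 1 + 1 = m - 1 := hc
    exact h (show n + 1 = m by omega)
  d_comp_d' i j k _ _ := by simp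
lemma covK_d (X : CochainComplex A ℤ) (n m : ℤ) : (covK X).d n m = -X.d (n-1) (m-1) := rfl

noncomputable def covf (X : CochainComplex A ℤ) : covK X ⟶ covP X where
  f n := biprod.lift (𝟙 (X.X (n-1))) (-X.d (n-1) n)
  comm' i j hij := by
    obtain rfl : i + 1 = j := hij
    rw [covP_d X rfl, covK_d]
    show biprod.lift (𝟙 (X.X (i-1))) (-X.d (i-1) i)
        ≫ (biprod.snd ≫ eqToHom (congrArg X.X (show i = i+1-1 by omega)) ≫ biprod.inl)
      = (-X.d (i-1) (i+1-1)) ≫ biprod.lift (𝟙 (X.X (i+1-1))) (-X.d (i+1-1) (i+1))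
    apply biprod.hom_ext
    · simp [d_eqToHom]
    · simp

noncomputable def covg (X : CochainComplex A ℤ) : covP X ⟶ X where
  f n := biprod.fst ≫ X.d (n-1) n + biprod.snd
  comm' i j hij := by
    obtain rfl : i + 1 = j := hij
    rw [covP_d X rfl]
    show (biprod.fst ≫ X.d (i-1) i + biprod.snd) ≫ X.d i (i+1)
      = (biprod.snd ≫ eqToHom (congrArg X.X (show i = i+1-1 by omega)) ≫ biprod.inl)
        ≫ (biprod.fst ≫ X.d (i+1-1) (i+1) + biprod.snd)
    simp [eqToHom_d]

lemma covSES (X : CochainComplex A ℤ) : DegSplitSES (covf X) (covg X) := by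
  constructor
  · ext n
    show biprod.lift (𝟙 (X.X (n-1))) (-X.d (n-1) n)
        ≫ (biprod.fst ≫ X.d (n-1) n + biprod.snd) = 0
    simp
  · intro n
    refine ⟨biprod.fst, biprod.inr, biprod.lift_fst _ _, ?_, ?_⟩
    · show biprod.inr ≫ (biprod.fst ≫ X.d (n-1) n + biprod.snd) = 𝟙 (X.X n)
      simp
    · show biprod.fst ≫ biprod.lift (𝟙 (X.X (n-1))) (-X.d (n-1) n)
          + ((biprod.fst ≫ X.d (n-1) n + biprod.snd :
              X.X (n-1) ⊞ X.X n ⟶ X.X n)) ≫ biprod.inr = 𝟙 (X.X (n-1) ⊞ X.X n)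
      apply biprod.hom_ext' <;> apply biprod.hom_ext <;> simp

noncomputable def covPHomotopy (X : CochainComplex A ℤ) : Homotopy (𝟙 (covP X)) 0 where
  hom i j := if h : j + 1 = i then
      biprod.fst ≫ eqToHom (congrArg X.X (show i - 1 = j by omega)) ≫ biprod.inr else 0
  zero i j h := dif_neg h
  comm i := by
    rw [dNext_eq _ (show (ComplexShape.up ℤ).Rel i (i+1) from rfl),
      prevD_eq _ (show (ComplexShape.up ℤ).Rel (i-1) i by simp)]
    show _
    rw [covP_d X rfl, covP_d X (show (i-1) + 1 = i by omega),
      dif_pos (show i + 1 = i + 1 from rfl), dif_pos (show (i-1) + 1 = i by omega)]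
    simp only [HomologicalComplex.id_f, HomologicalComplex.zero_f, add_zero, Category.assoc,
      biprod.inl_fst_assoc, biprod.inl_snd_assoc, biprod.inr_fst_assoc, biprod.inr_snd_assoc,
      eqToHom_trans_assoc, eqToHom_refl, Category.id_comp]
    show 𝟙 (X.X (i-1) ⊞ X.X i) = _
    rw [← biprod.total]
    abel

lemma covP_contr (X : CochainComplex A ℤ) : Contractible (covP X) :=
  ⟨covPHomotopy X⟩

/-! ### The injective hull -/

/-- The contractible complex `X.X n ⊞ X.X (n+1)` into which `X` embeds. -/
@[reducible]
noncomputable def hullI (X : CochainComplex A ℤ) : CochainComplex A ℤ where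
  X n := X.X n ⊞ X.X (n+1)
  d n m := if h : n + 1 = m then
      biprod.snd ≫ eqToHom (congrArg X.X h) ≫ biprod.inl else 0
  shape n m h := dif_neg h
  d_comp_d' i j k hij hjk := by
    show _
    rw [dif_pos (show i + 1 = j from hij), dif_pos (show j + 1 = k from hjk)]
    simp
lemma hullI_d (X : CochainComplex A ℤ) {n m : ℤ} (h : n + 1 = m) :
    (hullI X).d n m = biprod.snd ≫ eqToHom (congrArg X.X h) ≫ biprod.inl :=
  dif_pos h

/-- The cokernel of the hull, `X.X (n+1)` with differential `-d`. -/
noncomputable def hullK (X : CochainComplex A ℤ) : CochainComplex A ℤ where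
  X n := X.X (n+1)
  d n m := -X.d (n+1) (m+1)
  shape n m h := by
    show _
    rw [X.shape, neg_zero]
    intro hc
    have hc' : n + 1 + 1 = m + 1 := hc
    exact h (show n + 1 = m by omega)
  d_comp_d' i j k _ _ := by simp
lemma hullK_d (X : CochainComplex A ℤ) (n m : ℤ) : (hullK X).d n m = -X.d (n+1) (m+1) := rfl

noncomputable def hullf (X : CochainComplex A ℤ) : X ⟶ hullI X where
  f n := biprod.lift (𝟙 (X.X n)) (X.d n (n+1))
  comm' i j hij := by
    obtain rfl : i + 1 = j := hij
    rw [hullI_d X rfl]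
    show biprod.lift (𝟙 (X.X i)) (X.d i (i+1))
        ≫ (biprod.snd ≫ eqToHom (congrArg X.X (rfl : (i:ℤ)+1 = i+1)) ≫ biprod.inl)
      = X.d i (i+1) ≫ biprod.lift (𝟙 (X.X (i+1))) (X.d (i+1) (i+1+1))
    apply biprod.hom_ext
    · simp
    · simp

noncomputable def hullg (X : CochainComplex A ℤ) : hullI X ⟶ hullK X where
  f n := biprod.desc (-X.d n (n+1)) (𝟙 (X.X (n+1)))
  comm' i j hij := by
    obtain rfl : i + 1 = j := hij
    rw [hullI_d X rfl, hullK_d]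
    show biprod.desc (-X.d i (i+1)) (𝟙 (X.X (i+1))) ≫ (-X.d (i+1) (i+1+1))
      = (biprod.snd ≫ eqToHom (congrArg X.X (rfl : (i:ℤ)+1 = i+1)) ≫ biprod.inl)
        ≫ biprod.desc (-X.d (i+1) (i+1+1)) (𝟙 (X.X (i+1+1)))
    apply biprod.hom_ext'
    · simp
    · simp

lemma hullSES (X : CochainComplex A ℤ) : DegSplitSES (hullf X) (hullg X) := by
  constructor
  · ext n
    show biprod.lift (𝟙 (X.X n)) (X.d n (n+1))
        ≫ biprod.desc (-X.d n (n+1)) (𝟙 (X.X (n+1))) = 0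
    simp
  · intro n
    refine ⟨biprod.fst, biprod.inr, biprod.lift_fst _ _, ?_, ?_⟩
    · show biprod.inr ≫ biprod.desc (-X.d n (n+1)) (𝟙 (X.X (n+1))) = 𝟙 (X.X (n+1))
      simp
    · show biprod.fst ≫ biprod.lift (𝟙 (X.X n)) (X.d n (n+1))
          + biprod.desc (-X.d n (n+1)) (𝟙 (X.X (n+1))) ≫ biprod.inr = 𝟙 (X.X n ⊞ X.X (n+1))
      apply biprod.hom_ext' <;> apply biprod.hom_ext <;> simp

noncomputable def hullIHomotopy (X : CochainComplex A ℤ) : Homotopy (𝟙 (hullI X)) 0 where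
  hom i j := if h : j + 1 = i then
      biprod.fst ≫ eqToHom (congrArg X.X h.symm) ≫ biprod.inr else 0
  zero i j h := dif_neg h
  comm i := by
    rw [dNext_eq _ (show (ComplexShape.up ℤ).Rel i (i+1) from rfl),
      prevD_eq _ (show (ComplexShape.up ℤ).Rel (i-1) i by simp)]
    show _
    rw [hullI_d X rfl, hullI_d X (show (i-1) + 1 = i by omega),
      dif_pos (show i + 1 = i + 1 from rfl), dif_pos (show (i-1) + 1 = i by omega)]
    simp only [HomologicalComplex.id_f, HomologicalComplex.zero_f, add_zero, Category.assoc,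
      biprod.inl_fst_assoc, biprod.inl_snd_assoc, biprod.inr_fst_assoc, biprod.inr_snd_assoc,
      eqToHom_trans_assoc, eqToHom_refl, Category.id_comp]
    show 𝟙 (X.X i ⊞ X.X (i+1)) = _
    rw [← biprod.total]
    abel

lemma hullI_contr (X : CochainComplex A ℤ) : Contractible (hullI X) :=
  ⟨hullIHomotopy X⟩

/-! ### The main theorem -/

/-- the category of cochain complexes with the degreewise split
exact structure is Frobenius: projectives = injectives = contractible complexes,
and there are enough of both. -/
theorem stmt13 :
    (∀ P : CochainComplex A ℤ, RelProj P ↔ Contractible P) ∧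
    (∀ I : CochainComplex A ℤ, RelInj I ↔ Contractible I) ∧
    (∀ X : CochainComplex A ℤ, ∃ (K P : CochainComplex A ℤ) (f : K ⟶ P) (g : P ⟶ X),
      Contractible P ∧ DegSplitSES f g) ∧
    (∀ X : CochainComplex A ℤ, ∃ (I K : CochainComplex A ℤ) (f : X ⟶ I) (g : I ⟶ K),
      Contractible I ∧ DegSplitSES f g) := by
  refine ⟨fun P => ⟨fun hP => ?_, relProj_of_contractible⟩,
    fun I => ⟨fun hI => ?_, relInj_of_contractible⟩,
    fun X => ⟨covK X, covP X, covf X, covg X, covP_contr X, covSES X⟩,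
    fun X => ⟨hullI X, hullK X, hullf X, hullg X, hullI_contr X, hullSES X⟩⟩
  · obtain ⟨k, hk⟩ := hP (covf P) (covg P) (covSES P) (𝟙 P)
    exact contractible_of_retract k (covg P) hk (covP_contr P)
  · obtain ⟨k, hk⟩ := hI (hullf I) (hullg I) (hullSES I) (𝟙 I)
    exact contractible_of_retract (hullf I) k hk (hullI_contr I)
end
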